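/- arXiv:1512.04818 — 3 statements merged into one kernel-verified Lean document; each statement's English description precedes it below -/
import Mathlib

section
/- Every F_q-linear (h-1)-club of rank h in PG(1, q^h) that is disjoint from the point (0,1) and has head (1,0) is, up to the action of PGL(2, q^h), equal to the set {(x, Tr(x)) : x ∈ F_{q^h}, x ≠ 0}, where Tr is the relative trace from F_{q^h} to F_q. More precisely, such a club equals {(x, Tr(αx)) : x ∈ F_{q^h}^*} for some α ∈ F_{q^h}^*, and the diagonal map (x,y) ↦ (αx, y) carries it to {(x, Tr(x)) : x ∈ F_{q^h}^*}. -/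
open Projectivization Module

noncomputable def weightOf (K L : Type*) [Field K] [Field L] [Algebra K L]
    (W : Submodule K (L × L)) (P : Projectivization L (L × L)) : ℕ :=
  Module.finrank K (W ⊓ (P.submodule.restrictScalars K) : Submodule K (L × L))

def linearSetOf (K L : Type*) [Field K] [Field L] [Algebra K L]
    (W : Submodule K (L × L)) : Set (Projectivization L (L × L)) :=
  {P | ∃ v : L × L, ∃ hv : v ≠ 0, v ∈ W ∧ P = Projectivization.mk L v hv}

set_option maxHeartbeats 1000000 in
/-- every `F_q`-linear `(h-1)`-club of rank `h` in `PG(1, q^h)` with head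
`(1,0)` and disjoint from `(0,1)` equals `{(x, Tr (α x)) : x ≠ 0}` for some `α ≠ 0`, and
the diagonal map `(x, y) ↦ (α x, y)` carries it to `{(x, Tr x) : x ≠ 0}`. -/
theorem stmt4 (K L : Type*) [Field K] [Field L] [Algebra K L] [Fintype K] [Fintype L]
    (h : ℕ) (hh : 2 ≤ h) (hrank : Module.finrank K L = h)
    (W : Submodule K (L × L)) (hWrank : Module.finrank K W = h)
    (hhead : weightOf K L W (Projectivization.mk L ((1 : L), (0 : L)) (by simp)) = h - 1)
    (hdisj : Projectivization.mk L ((0 : L), (1 : L)) (by simp) ∉ linearSetOf K L W)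
    (hscatt : ∀ P ∈ linearSetOf K L W,
      P ≠ Projectivization.mk L ((1 : L), (0 : L)) (by simp) → weightOf K L W P = 1) :
    ∃ α : L, ∃ hα : α ≠ 0,
      linearSetOf K L W =
        {P | ∃ x : L, ∃ hx : x ≠ 0,
          P = Projectivization.mk L (x, algebraMap K L (Algebra.trace K L (α * x)))
            (by simp [Prod.ext_iff, hx])} ∧
      ∃ e : (L × L) ≃ₗ[L] (L × L), (∀ v : L × L, e v = (α * v.1, v.2)) ∧
        Projectivization.map e.toLinearMap e.injective '' linearSetOf K L W =
          {P | ∃ x : L, ∃ hx : x ≠ 0,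
            P = Projectivization.mk L (x, algebraMap K L (Algebra.trace K L x))
              (by simp [Prod.ext_iff, hx])} := by
  classical
  -- the head submodule
  set M : Submodule K (L × L) :=
      ((Projectivization.mk L ((1:L),(0:L)) (by simp)).submodule.restrictScalars K) with hM
  have hMker : M = LinearMap.ker (LinearMap.snd K L L) := by
    rw [hM, Projectivization.submodule_mk]
    ext ⟨x, y⟩
    simp only [Submodule.restrictScalars_mem, Submodule.mem_span_singleton,
      LinearMap.mem_ker, LinearMap.snd_apply]
    constructor
    · rintro ⟨c, hc⟩
      rw [Prod.ext_iff] at hc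
      simpa using hc.2.symm
    · intro hy
      subst hy
      exact ⟨x, by simp [Prod.ext_iff]⟩
  have hWM : Module.finrank K (W ⊓ M : Submodule K (L × L)) = h - 1 := hhead
  -- there is an element of W with nonzero second coordinate
  have hex : ∃ w, w ∈ W ∧ w.2 ≠ 0 := by
    by_contra hc
    push_neg at hc
    have hle : W ≤ M := by
      intro w hw
      rw [hMker]
      simpa using hc w hw
    rw [inf_eq_left.mpr hle, hWrank] at hWM
    omega
  obtain ⟨w₀, hw₀W, hb⟩ := hex
  set a : L := w₀.1 with ha_def
  set b : L := w₀.2 with hb_def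
  -- U₀
  set U₀ : Submodule K L := W.comap (LinearMap.inl K L L) with hU₀
  have hU₀mem : ∀ x : L, x ∈ U₀ ↔ ((x, 0) : L × L) ∈ W := fun x => Iff.rfl
  have hU₀rank : Module.finrank K U₀ = h - 1 := by
    have hmap : U₀.map (LinearMap.inl K L L) = W ⊓ M := by
      ext p
      constructor
      · rintro ⟨u, hu, heq⟩
        rw [LinearMap.inl_apply] at heq
        subst heq
        refine ⟨(hU₀mem u).mp hu, ?_⟩
        rw [hMker]
        simp
      · rintro ⟨hpW, hpM⟩
        rw [hMker] at hpM
        have hp2 : p.2 = 0 := hpM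
        have hp : ((p.1, (0:L)) : L × L) = p := by
          rw [Prod.ext_iff]; exact ⟨rfl, hp2.symm⟩
        refine ⟨p.1, ?_, ?_⟩
        · show p.1 ∈ U₀
          rw [hU₀mem, hp]; exact hpW
        · rw [LinearMap.inl_apply]; exact hp
    rw [← hWM, ← hmap]
    exact (Submodule.equivMapOfInjective (LinearMap.inl K L L)
      LinearMap.inl_injective U₀).finrank_eq
  -- every element of W decomposes as (u,0) + t • w₀
  have hdec : ∀ w ∈ W, ∃ t : K, ∃ u, u ∈ U₀ ∧ w = (u, 0) + t • w₀ := by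
    -- second coordinates form a 1-dim space spanned by b
    have hsnd : ∀ w ∈ W, ∃ t : K, w.2 = t • b := by
      set f : W →ₗ[K] L := (LinearMap.snd K L L).comp W.subtype with hf
      have hker : Module.finrank K (LinearMap.ker f) = h - 1 := by
        have h1 : LinearMap.ker f = Submodule.comap W.subtype M := by
          rw [hf, LinearMap.ker_comp, hMker]
        have h2 : (Submodule.comap W.subtype M).map W.subtype = W ⊓ M :=
          Submodule.map_comap_subtype W M
        rw [h1, ← hWM, ← h2]
        exact (Submodule.equivMapOfInjective _ W.injective_subtype _).finrank_eq
      have hrange : Module.finrank K (LinearMap.range f) = 1 := by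
        have := LinearMap.finrank_range_add_finrank_ker f
        rw [hker, hWrank] at this
        omega
      have hspan : (Submodule.span K {b}) = LinearMap.range f := by
        apply Submodule.eq_of_le_of_finrank_eq
        · rw [Submodule.span_le, Set.singleton_subset_iff]
          exact ⟨⟨w₀, hw₀W⟩, rfl⟩
        · rw [hrange, finrank_span_singleton hb]
      intro w hw
      have : w.2 ∈ LinearMap.range f := ⟨⟨w, hw⟩, rfl⟩
      rw [← hspan, Submodule.mem_span_singleton] at this
      obtain ⟨t, ht⟩ := this
      exact ⟨t, ht.symm⟩
    intro w hw
    obtain ⟨t, ht⟩ := hsnd w hw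
    refine ⟨t, w.1 - t • a, ?_, ?_⟩
    · rw [hU₀mem]
      have : ((w.1 - t • a, 0) : L × L) = w - t • w₀ := by
        rw [Prod.ext_iff]
        constructor
        · simp [ha_def]
        · simp [ht, hb_def]
      rw [this]
      exact W.sub_mem hw (W.smul_mem t hw₀W)
    · rw [Prod.ext_iff]
      constructor
      · simp [ha_def]
      · simp [ht, hb_def]
  -- a ∉ U₀
  have haU : a ∉ U₀ := by
    intro hcon
    apply hdisj
    refine ⟨(0, b), by simp [Prod.ext_iff, hb], ?_, ?_⟩
    · have : ((0, b) : L × L) = w₀ - (a, 0) := by simp [Prod.ext_iff, ha_def, hb_def]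
      rw [this]
      exact W.sub_mem hw₀W (by rwa [hU₀mem] at hcon)
    · rw [Projectivization.mk_eq_mk_iff']
      exact ⟨b⁻¹, by simp [Prod.ext_iff, smul_eq_mul, inv_mul_cancel₀ hb]⟩
  have ha : a ≠ 0 := fun hcon => haU (hcon ▸ U₀.zero_mem)
  -- U₁ = b⁻¹ • U₀
  set μ : L →ₗ[K] L := LinearMap.mulLeft K b⁻¹ with hμ
  have hμinj : Function.Injective μ := by
    intro x y hxy
    simpa [hμ, LinearMap.mulLeft_apply] using
      mul_left_cancel₀ (inv_ne_zero hb) hxy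
  set U₁ : Submodule K L := U₀.map μ with hU₁
  have hU₁mem : ∀ y : L, y ∈ U₁ ↔ ∃ u ∈ U₀, b⁻¹ * u = y := by
    intro y
    simp [hU₁, hμ, Submodule.mem_map, LinearMap.mulLeft_apply]
  have hU₁rank : Module.finrank K U₁ = h - 1 := by
    rw [← hU₀rank]
    exact ((Submodule.equivMapOfInjective μ hμinj U₀).finrank_eq).symm
  set v₁ : L := b⁻¹ * a with hv₁def
  have hv₁ : v₁ ≠ 0 := mul_ne_zero (inv_ne_zero hb) ha
  have hv₁U₁ : v₁ ∉ U₁ := by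
    rw [hU₁mem]
    rintro ⟨u, hu, hbu⟩
    exact haU (by rwa [mul_left_cancel₀ (inv_ne_zero hb) hbu] at hu)
  -- IsCompl
  have hdisj₁ : Disjoint U₁ (Submodule.span K {v₁}) :=
    (Submodule.disjoint_span_singleton' hv₁).mpr hv₁U₁
  have hsup : U₁ ⊔ Submodule.span K {v₁} = ⊤ := by
    apply Submodule.eq_top_of_finrank_eq
    have := Submodule.finrank_sup_add_finrank_inf_eq U₁ (Submodule.span K {v₁})
    rw [hdisj₁.eq_bot, finrank_bot, add_zero, hU₁rank, finrank_span_singleton hv₁] at this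
    rw [hrank]
    omega
  have hcompl : IsCompl U₁ (Submodule.span K {v₁}) := ⟨hdisj₁, codisjoint_iff.mpr hsup⟩
  -- the functional g
  set ψ : (Submodule.span K {v₁} : Submodule K L) →ₗ[K] K :=
    (LinearEquiv.toSpanNonzeroSingleton K L v₁ hv₁).symm.toLinearMap with hψ
  set g : L →ₗ[K] K := LinearMap.ofIsCompl hcompl 0 ψ with hg
  have hg0 : ∀ u ∈ U₁, g u = 0 := by
    intro u hu
    have h2 := LinearMap.ofIsCompl_left_apply hcompl (φ := (0 : U₁ →ₗ[K] K)) (ψ := ψ) ⟨u, hu⟩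
    rw [hg]
    exact h2.trans (LinearMap.zero_apply _)
  have hg1 : g v₁ = 1 := by
    have h2 := LinearMap.ofIsCompl_right_apply hcompl (φ := (0 : U₁ →ₗ[K] K)) (ψ := ψ)
      ⟨v₁, Submodule.mem_span_singleton_self v₁⟩
    have h3 : (LinearEquiv.toSpanNonzeroSingleton K L v₁ hv₁).symm
        ⟨v₁, Submodule.mem_span_singleton_self v₁⟩ = 1 := by
      rw [LinearEquiv.symm_apply_eq]
      apply Subtype.ext
      simp
    rw [hg, h2, hψ]
    exact h3
  -- α
  set α : L := ((Algebra.traceForm K L).toDual (traceForm_nondegenerate K L)).symm g with hα_def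
  have htr : ∀ x : L, Algebra.trace K L (α * x) = g x := by
    intro x
    have := LinearMap.BilinForm.apply_toDual_symm_apply (B := Algebra.traceForm K L)
      (hB := traceForm_nondegenerate K L) (f := g) (v := x)
    rwa [Algebra.traceForm_apply] at this
  have hα : α ≠ 0 := by
    intro hcon
    have := htr v₁
    rw [hcon, zero_mul, map_zero, hg1] at this
    exact one_ne_zero this.symm
  have htr0 : ∀ u ∈ U₀, Algebra.trace K L (α * (b⁻¹ * u)) = 0 := by
    intro u hu
    rw [htr]
    exact hg0 _ ((hU₁mem _).mpr ⟨u, hu, rfl⟩)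
  have htr1 : Algebra.trace K L (α * v₁) = 1 := by rw [htr, hg1]
  -- main set equality
  have hset : linearSetOf K L W =
      {P | ∃ x : L, ∃ hx : x ≠ 0,
        P = Projectivization.mk L (x, algebraMap K L (Algebra.trace K L (α * x)))
          (by simp [Prod.ext_iff, hx])} := by
    ext P
    constructor
    · rintro ⟨v, hv, hvW, rfl⟩
      obtain ⟨t, u, hu, hveq⟩ := hdec v hvW
      by_cases ht : t = 0
      · -- v = (u, 0)
        subst ht
        have hvu : v = (u, 0) := by simpa using hveq
        have hu0 : u ≠ 0 := by
          intro hcon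
          apply hv
          rw [hvu, hcon]
          simp
        refine ⟨b⁻¹ * u, mul_ne_zero (inv_ne_zero hb) hu0, ?_⟩
        rw [Projectivization.mk_eq_mk_iff']
        refine ⟨b, ?_⟩
        rw [htr0 u hu, map_zero, hvu, Prod.smul_mk, smul_eq_mul, smul_zero,
          mul_inv_cancel_left₀ hb]
      · -- t ≠ 0
        set t' : L := algebraMap K L t with ht'def
        have ht'0 : t' ≠ 0 := by
          rw [ht'def]
          exact (map_ne_zero (algebraMap K L)).mpr ht
        have hv1 : v.1 = u + t • a := by rw [hveq]; simp [ha_def]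
        have hv2 : v.2 = t • b := by rw [hveq]; simp [hb_def]
        have hv10 : v.1 ≠ 0 := by
          intro hcon
          apply haU
          have h1 : t • a = -u := by
            have := hcon
            rw [hv1] at this
            linear_combination (norm := module) this
          have h2 : a = t⁻¹ • (-u) := by
            rw [← h1, smul_smul, inv_mul_cancel₀ ht, one_smul]
          rw [h2]
          exact U₀.smul_mem _ (U₀.neg_mem hu)
        set c : L := t' * b with hcdef
        have hc : c ≠ 0 := mul_ne_zero ht'0 hb
        have hxdec : c⁻¹ * v.1 = b⁻¹ * (t⁻¹ • u) + b⁻¹ * a := by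
          rw [hv1, hcdef, Algebra.smul_def, Algebra.smul_def, map_inv₀, ← ht'def]
          field_simp
        have htrx : Algebra.trace K L (α * (c⁻¹ * v.1)) = 1 := by
          rw [hxdec, mul_add, map_add, htr0 _ (U₀.smul_mem t⁻¹ hu), ← hv₁def, htr1,
            zero_add]
        refine ⟨c⁻¹ * v.1, mul_ne_zero (inv_ne_zero hc) hv10, ?_⟩
        rw [Projectivization.mk_eq_mk_iff']
        refine ⟨c, ?_⟩
        rw [htrx, map_one, Prod.smul_mk, smul_eq_mul, smul_eq_mul, mul_one,
          mul_inv_cancel_left₀ hc, Prod.ext_iff]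
        refine ⟨rfl, ?_⟩
        rw [hv2, hcdef, ht'def, Algebra.smul_def]
    · rintro ⟨x, hx, rfl⟩
      have hxtop : x ∈ U₁ ⊔ Submodule.span K {v₁} := by rw [hsup]; trivial
      obtain ⟨y, hy, z, hz, hyz⟩ := Submodule.mem_sup.mp hxtop
      obtain ⟨u, hu, hbu⟩ := (hU₁mem y).mp hy
      obtain ⟨t, htz⟩ := Submodule.mem_span_singleton.mp hz
      set w : L × L := (u, 0) + t • w₀ with hwdef
      have hwW : w ∈ W := W.add_mem ((hU₀mem u).mp hu) (W.smul_mem t hw₀W)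
      have hw1 : w.1 = b * x := by
        rw [hwdef]
        show u + t • a = b * x
        rw [← hyz, ← hbu, ← htz, hv₁def, Algebra.smul_def, Algebra.smul_def]
        field_simp
      have hw2 : w.2 = t • b := by
        rw [hwdef]
        show (0:L) + t • w₀.2 = t • b
        rw [zero_add]
      have hw0 : w ≠ 0 := by
        intro hcon
        have : w.1 = 0 := by rw [hcon]; rfl
        rw [hw1] at this
        exact (mul_ne_zero hb hx) this
      have htrx2 : Algebra.trace K L (α * x) = t := by
        rw [← hyz, ← hbu, ← htz, mul_add, map_add, htr0 _ hu, zero_add,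
          mul_smul_comm, map_smul, htr1, smul_eq_mul, mul_one]
      refine ⟨w, hw0, hwW, ?_⟩
      rw [Projectivization.mk_eq_mk_iff']
      refine ⟨b⁻¹, ?_⟩
      have hwp : w = (w.1, w.2) := rfl
      rw [hwp, hw1, hw2, Prod.smul_mk, htrx2]
      simp only [smul_eq_mul, Prod.mk.injEq]
      constructor
      · exact inv_mul_cancel_left₀ hb x
      · rw [Algebra.smul_def]
        field_simp
  refine ⟨α, hα, hset, ?_⟩
  set e : (L × L) ≃ₗ[L] (L × L) :=
    (LinearEquiv.smulOfNeZero L L α hα).prodCongr (LinearEquiv.refl L L) with hedef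
  have heapp : ∀ v : L × L, e v = (α * v.1, v.2) := by
    intro v
    rw [hedef]
    simp [LinearEquiv.smulOfNeZero, LinearEquiv.smulOfUnit, smul_eq_mul]
  refine ⟨e, heapp, ?_⟩
  rw [hset]
  ext P
  constructor
  · rintro ⟨Q, ⟨x, hx, rfl⟩, rfl⟩
    refine ⟨α * x, mul_ne_zero hα hx, ?_⟩
    rw [Projectivization.map_mk, Projectivization.mk_eq_mk_iff']
    refine ⟨1, ?_⟩
    rw [one_smul]
    simp only [LinearEquiv.coe_coe]
    exact (heapp (x, algebraMap K L (Algebra.trace K L (α * x)))).symm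
  · rintro ⟨y, hy, rfl⟩
    have hyy : α * (α⁻¹ * y) = y := mul_inv_cancel_left₀ hα y
    refine ⟨Projectivization.mk L (α⁻¹ * y,
        algebraMap K L (Algebra.trace K L (α * (α⁻¹ * y))))
        (by simp [Prod.ext_iff, mul_ne_zero (inv_ne_zero hα) hy]),
      ⟨α⁻¹ * y, mul_ne_zero (inv_ne_zero hα) hy, rfl⟩, ?_⟩
    rw [Projectivization.map_mk, Projectivization.mk_eq_mk_iff']
    refine ⟨1, ?_⟩
    rw [one_smul]
    simp only [LinearEquiv.coe_coe, heapp, hyy]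
end

section
/- Let q be a prime power, h ≥ 3, and λ ∈ F_{q^h} a generator of F_{q^h} over F_q (so that 1, λ, ..., λ^{h-1} is an F_q-basis). The set C = {(t₁λ + t₂λ² + ... + t_{h-1}λ^{h-1}, t_{h-1} + t_h λ) : t_i ∈ F_q, (t₁,...,t_h) ≠ 0} ⊆ PG(1, q^h) is an F_q-linear set of rank h in which the point (1,0) has weight h-2 and all other points have weight 1; consequently |C| = q^{h-1} + q^{h-2} + 1. -/
open Projectivization Module

namespace Stmt7

open Polynomial

variable {K : Type*} [Field K] {h : ℕ}

/-- extend a tuple by zero -/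
def ext (t : Fin h → K) (i : ℕ) : K := if hi : i < h then t ⟨i, hi⟩ else 0

lemma ext_lt (t : Fin h → K) {i : ℕ} (hi : i < h) : ext t i = t ⟨i, hi⟩ := dif_pos hi

lemma ext_zero (i : ℕ) : ext (0 : Fin h → K) i = 0 := by unfold ext; split <;> rfl

noncomputable def low (n : ℕ) (t : Fin h → K) : K[X] :=
  ∑ i ∈ Finset.range n, C (ext t i) * X ^ i

lemma low_coeff (n : ℕ) (t : Fin h → K) (j : ℕ) :
    (low n t).coeff j = if j < n then ext t j else 0 := by
  simp only [low, finset_sum_coeff, coeff_C_mul, coeff_X_pow, mul_ite, mul_one, mul_zero]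
  rw [Finset.sum_ite_eq (Finset.range n) j (fun i => ext t i)]
  simp [Finset.mem_range]

lemma low_natDegree_le (n : ℕ) (t : Fin h → K) : (low n t).natDegree ≤ n - 1 := by
  apply natDegree_sum_le_of_forall_le
  intro i hi
  exact (natDegree_C_mul_le _ _).trans (by
    rw [natDegree_X_pow]; exact Nat.le_sub_one_of_lt (Finset.mem_range.mp hi))

lemma aeval_low {L : Type*} [Field L] [Algebra K L] (lam : L) (n : ℕ) (t : Fin h → K) :
    aeval lam (low n t) = ∑ i ∈ Finset.range n, ext t i • lam ^ i := by
  simp [low, Algebra.smul_def]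

lemma vanish {L : Type*} [Field L] [Algebra K L] (lam : L)
    (b : Basis (Fin h) K L) (hb : ∀ i : Fin h, b i = lam ^ (i : ℕ))
    {p : K[X]} (hp : p.natDegree < h) (hz : aeval lam p = 0) : p = 0 := by
  have hsum : ∑ i ∈ Finset.range h, p.coeff i • lam ^ i = 0 := by
    rw [← Polynomial.aeval_eq_sum_range' hp, hz]
  rw [← Fin.sum_univ_eq_sum_range (fun i => p.coeff i • lam ^ i) h] at hsum
  have hcoeff : ∀ i : Fin h, p.coeff i = 0 := by
    apply Fintype.linearIndependent_iff.mp b.linearIndependent (fun i => p.coeff (i : ℕ))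
    simpa only [hb] using hsum
  ext j
  rcases lt_or_ge j h with hj | hj
  · simpa using hcoeff ⟨j, hj⟩
  · simp [coeff_eq_zero_of_natDegree_lt (lt_of_lt_of_le hp hj)]

noncomputable def Wp (t : Fin h → K) : K[X] := C (ext t (h - 2)) + C (ext t (h - 1)) * X

noncomputable def Fp (t : Fin h → K) : K[X] := low (h - 1) t

noncomputable def LoP (t : Fin h → K) : K[X] := low (h - 2) t

lemma Wp_natDegree_le (t : Fin h → K) : (Wp t).natDegree ≤ 1 := by
  apply (natDegree_add_le _ _).trans
  simp only [natDegree_C, max_le_iff]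
  exact ⟨Nat.zero_le 1, (natDegree_C_mul_le _ _).trans natDegree_X_le⟩

lemma Wp_coeff0 (t : Fin h → K) : (Wp t).coeff 0 = ext t (h - 2) := by simp [Wp]

lemma Wp_coeff1 (t : Fin h → K) : (Wp t).coeff 1 = ext t (h - 1) := by simp [Wp, coeff_C]

lemma Wp_eq_zero_iff (t : Fin h → K) : Wp t = 0 ↔ ext t (h - 2) = 0 ∧ ext t (h - 1) = 0 := by
  constructor
  · intro hz
    exact ⟨by rw [← Wp_coeff0 t, hz, coeff_zero], by rw [← Wp_coeff1 t, hz, coeff_zero]⟩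
  · rintro ⟨h1, h2⟩; simp [Wp, h1, h2]

lemma aeval_Wp {L : Type*} [Field L] [Algebra K L] (lam : L) (t : Fin h → K) :
    aeval lam (Wp t) = algebraMap K L (ext t (h - 2)) + algebraMap K L (ext t (h - 1)) * lam := by
  simp [Wp]

lemma heart (hh : 3 ≤ h) {t s : Fin h → K} (hw : Wp t ≠ 0)
    (heq : Wp s * Fp t = Wp t * Fp s) : ∃ μ : K, s = μ • t := by
  classical
  have h2 : h - 1 = (h - 2) + 1 := by omega
  have hFt : Fp t = LoP t + C (ext t (h - 2)) * X ^ (h - 2) := by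
    rw [Fp, low, h2, Finset.sum_range_succ]; rfl
  have hFs : Fp s = LoP s + C (ext s (h - 2)) * X ^ (h - 2) := by
    rw [Fp, low, h2, Finset.sum_range_succ]; rfl
  have key : Wp t * LoP s - Wp s * LoP t
      = C (ext s (h-1) * ext t (h-2) - ext t (h-1) * ext s (h-2)) * X ^ (h - 1) := by
    rw [hFt, hFs] at heq
    have hX : (X : K[X]) ^ (h - 1) = X ^ (h - 2) * X := by rw [h2, pow_succ]
    rw [hX]
    simp only [Wp, map_sub, map_mul] at heq ⊢
    linear_combination -heq
  have hdeg : ∀ a c : Fin h → K, ((Wp a : K[X]) * LoP c).natDegree < h - 1 := by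
    intro a c
    have h1 := natDegree_mul_le (p := Wp a) (q := LoP c)
    have h3 : (LoP c).natDegree ≤ h - 2 - 1 := low_natDegree_le _ _
    have h4 := Wp_natDegree_le a
    omega
  have hδ : ext s (h-1) * ext t (h-2) - ext t (h-1) * ext s (h-2) = 0 := by
    have hc := congrArg (fun p : K[X] => p.coeff (h - 1)) key
    simp only [coeff_sub] at hc
    rw [coeff_eq_zero_of_natDegree_lt (hdeg t s), coeff_eq_zero_of_natDegree_lt (hdeg s t),
      coeff_C_mul, coeff_X_pow, if_pos rfl, mul_one] at hc
    simpa using hc.symm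
  have hw' : ¬(ext t (h-2) = 0 ∧ ext t (h-1) = 0) := fun hc => hw ((Wp_eq_zero_iff t).mpr hc)
  set t2 := ext t (h-2) with ht2d
  set t3 := ext t (h-1) with ht3d
  set s2 := ext s (h-2) with hs2d
  set s3 := ext s (h-1) with hs3d
  obtain ⟨μ, hprop⟩ : ∃ μ : K, s2 = μ * t2 ∧ s3 = μ * t3 := by
    by_cases ht2 : t2 = 0
    · have ht3 : t3 ≠ 0 := fun c => hw' ⟨ht2, c⟩
      have hs20 : s2 = 0 := by
        have h0 : t3 * s2 = 0 := by linear_combination -hδ + s3 * ht2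
        exact (mul_eq_zero.mp h0).resolve_left ht3
      exact ⟨s3 / t3, by rw [hs20, ht2, mul_zero], by field_simp⟩
    · refine ⟨s2 / t2, by field_simp, ?_⟩
      field_simp
      linear_combination hδ
  have hWs : Wp s = C μ * Wp t := by
    simp only [Wp, ← ht2d, ← ht3d, ← hs2d, ← hs3d, hprop.1, hprop.2, map_mul]
    ring
  have hLo : LoP s = C μ * LoP t := by
    apply mul_left_cancel₀ hw
    have hk : Wp t * LoP s = Wp s * LoP t := by
      have hkey := key
      rw [hδ] at hkey
      simpa [sub_eq_zero] using hkey
    rw [hk, hWs]; ring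
  refine ⟨μ, ?_⟩
  funext i
  rcases lt_trichotomy (i : ℕ) (h - 2) with hi | hi | hi
  · have hc := congrArg (fun p : K[X] => p.coeff (i : ℕ)) hLo
    simp only [low_coeff, LoP, coeff_C_mul, if_pos hi] at hc
    rw [ext_lt t i.isLt, ext_lt s i.isLt] at hc
    simpa [Fin.eta] using hc
  · have hieq : i = ⟨h - 2, by omega⟩ := Fin.ext hi
    rw [hieq]
    have hp := hprop.1
    rw [hs2d, ht2d, ext_lt s (by omega : h - 2 < h), ext_lt t (by omega : h - 2 < h)] at hp
    simpa using hp
  · have hival : (i : ℕ) = h - 1 := by have := i.isLt; omega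
    have hieq : i = ⟨h - 1, by omega⟩ := Fin.ext hival
    rw [hieq]
    have hp := hprop.2
    rw [hs3d, ht3d, ext_lt s (by omega : h - 1 < h), ext_lt t (by omega : h - 1 < h)] at hp
    simpa using hp


variable (K) {L : Type*} [Field L] [Algebra K L]

noncomputable def phi (hh : 3 ≤ h) (lam : L) : (Fin h → K) →ₗ[K] L × L where
  toFun t := (∑ i : Fin (h - 1), t (Fin.castLE (by omega) i) • lam ^ ((i : ℕ) + 1),
      t ⟨h - 2, by omega⟩ • (1 : L) + t ⟨h - 1, by omega⟩ • lam)
  map_add' t s := by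
    ext
    · simp [add_smul, Finset.sum_add_distrib]
    · simp only [Pi.add_apply, add_smul, Prod.snd_add]
      abel
  map_smul' a t := by
    ext
    · simp [Finset.smul_sum, smul_smul]
    · simp [smul_add, smul_smul]

variable {K}

lemma phi_fst (hh : 3 ≤ h) (lam : L) (t : Fin h → K) :
    (phi K hh lam t).1 = lam * Polynomial.aeval lam (Fp t) := by
  show (∑ i : Fin (h - 1), t (Fin.castLE (by omega) i) • lam ^ ((i : ℕ) + 1)) = _
  rw [Fp, aeval_low, Finset.mul_sum]
  rw [← Fin.sum_univ_eq_sum_range (fun i => lam * (ext t i • lam ^ i)) (h - 1)]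
  apply Finset.sum_congr rfl
  intro i _
  rw [ext_lt t (show (i : ℕ) < h by omega)]
  rw [mul_smul_comm, ← pow_succ']
  rfl

lemma phi_snd (hh : 3 ≤ h) (lam : L) (t : Fin h → K) :
    (phi K hh lam t).2 = Polynomial.aeval lam (Wp t) := by
  show (t ⟨h - 2, by omega⟩ • (1 : L) + t ⟨h - 1, by omega⟩ • lam) = _
  rw [aeval_Wp, ext_lt t (show h - 2 < h by omega), ext_lt t (show h - 1 < h by omega)]
  rw [Algebra.smul_def, Algebra.smul_def, mul_one]

lemma lam_ne_zero (hh : 3 ≤ h) (lam : L) (b : Basis (Fin h) K L)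
    (hb : ∀ i : Fin h, b i = lam ^ (i : ℕ)) : lam ≠ 0 := by
  have h1 : b ⟨1, by omega⟩ = lam := by rw [hb]; exact pow_one lam
  exact h1 ▸ b.ne_zero _

lemma phi_inj (hh : 3 ≤ h) (lam : L) (b : Basis (Fin h) K L)
    (hb : ∀ i : Fin h, b i = lam ^ (i : ℕ)) : Function.Injective (phi K hh lam) := by
  have hker : ∀ t : Fin h → K, phi K hh lam t = 0 → t = 0 := by
    intro t ht
    have h2 : Polynomial.aeval lam (Wp t) = 0 := by
      rw [← phi_snd hh lam t, ht]; rfl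
    have hW0 : Wp t = 0 := vanish lam b hb (lt_of_le_of_lt (Wp_natDegree_le t) (by omega)) h2
    have h1 : lam * Polynomial.aeval lam (Fp t) = 0 := by
      rw [← phi_fst hh lam t, ht]; rfl
    have hF0 : Fp t = 0 := by
      refine vanish lam b hb (lt_of_le_of_lt (low_natDegree_le (h - 1) t) (by omega)) ?_
      rcases mul_eq_zero.mp h1 with hc | hc
      · exact absurd hc (lam_ne_zero hh lam b hb)
      · exact hc
    have hWc := (Wp_eq_zero_iff t).mp hW0
    funext i
    rcases lt_or_ge (i : ℕ) (h - 1) with hi | hi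
    · have hc := congrArg (fun p : Polynomial K => p.coeff (i : ℕ)) hF0
      simp only [Fp, low_coeff, if_pos hi, Polynomial.coeff_zero] at hc
      rw [ext_lt t i.isLt] at hc
      simpa [Fin.eta] using hc
    · have hival : (i : ℕ) = h - 1 := by have := i.isLt; omega
      have hieq : i = ⟨h - 1, by omega⟩ := Fin.ext hival
      rw [hieq]
      have hc := hWc.2
      rw [ext_lt t (show h - 1 < h by omega)] at hc
      simpa using hc
  intro t s hts
  have : phi K hh lam (t - s) = 0 := by rw [map_sub, hts, sub_self]
  have := hker _ this
  exact sub_eq_zero.mp this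

lemma keyprop (hh : 3 ≤ h) (lam : L) (b : Basis (Fin h) K L)
    (hb : ∀ i : Fin h, b i = lam ^ (i : ℕ)) {t s : Fin h → K} (hwt : Wp t ≠ 0) {c : L}
    (hc : phi K hh lam s = c • phi K hh lam t) : ∃ μ : K, s = μ • t := by
  have hlam := lam_ne_zero hh lam b hb
  have h1 : Polynomial.aeval lam (Wp s) = c * Polynomial.aeval lam (Wp t) := by
    rw [← phi_snd hh lam s, ← phi_snd hh lam t, hc]; rfl
  have h2 : lam * Polynomial.aeval lam (Fp s) = c * (lam * Polynomial.aeval lam (Fp t)) := by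
    rw [← phi_fst hh lam s, ← phi_fst hh lam t, hc]; rfl
  have h2' : Polynomial.aeval lam (Fp s) = c * Polynomial.aeval lam (Fp t) := by
    apply mul_left_cancel₀ hlam
    rw [h2]; ring
  have hmul : Polynomial.aeval lam (Wp s * Fp t) = Polynomial.aeval lam (Wp t * Fp s) := by
    rw [map_mul, map_mul, h1, h2']; ring
  have hid : Wp s * Fp t = Wp t * Fp s := by
    have hz : Polynomial.aeval lam (Wp s * Fp t - Wp t * Fp s) = 0 := by
      rw [map_sub, hmul, sub_self]
    have hdeg : (Wp s * Fp t - Wp t * Fp s).natDegree < h := by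
      have d1 := Polynomial.natDegree_sub_le (Wp s * Fp t) (Wp t * Fp s)
      have d2 := Polynomial.natDegree_mul_le (p := Wp s) (q := Fp t)
      have d3 := Polynomial.natDegree_mul_le (p := Wp t) (q := Fp s)
      have d4 := Wp_natDegree_le s
      have d5 := Wp_natDegree_le t
      have d6 : (Fp t).natDegree ≤ h - 1 - 1 := low_natDegree_le _ _
      have d7 : (Fp s).natDegree ≤ h - 1 - 1 := low_natDegree_le _ _
      omega
    exact sub_eq_zero.mp (vanish lam b hb hdeg hz)
  exact heart hh hwt hid


lemma ext_smul (μ : K) (t : Fin h → K) (i : ℕ) : ext (μ • t) i = μ * ext t i := by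
  unfold ext; split <;> simp

lemma Wp_zero : Wp (0 : Fin h → K) = 0 := by
  simp [Wp, ext_zero]

lemma Wp_smul (μ : K) (t : Fin h → K) : Wp (μ • t) = Polynomial.C μ * Wp t := by
  simp only [Wp, ext_smul, map_mul]
  ring

noncomputable def proj2 (K : Type*) [Field K] {h : ℕ} (hh : 3 ≤ h) :
    (Fin h → K) →ₗ[K] K × K :=
  LinearMap.prod (LinearMap.proj ⟨h - 2, by omega⟩) (LinearMap.proj ⟨h - 1, by omega⟩)

lemma Wp_eq_zero_iff_proj2 (hh : 3 ≤ h) (t : Fin h → K) :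
    Wp t = 0 ↔ proj2 K hh t = 0 := by
  rw [Wp_eq_zero_iff, ext_lt t (show h - 2 < h by omega), ext_lt t (show h - 1 < h by omega)]
  constructor
  · intro hc
    exact Prod.ext (by exact hc.1) (by exact hc.2)
  · intro hc
    exact ⟨congrArg Prod.fst hc, congrArg Prod.snd hc⟩

lemma proj2_rank (hh : 3 ≤ h) : Module.finrank K (LinearMap.ker (proj2 K hh)) = h - 2 := by
  have hsurj : LinearMap.range (proj2 K hh) = ⊤ := by
    rw [LinearMap.range_eq_top]
    rintro ⟨a, c⟩
    have hne : (⟨h - 1, by omega⟩ : Fin h) ≠ ⟨h - 2, by omega⟩ :=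
      Fin.ne_of_val_ne (show h - 1 ≠ h - 2 by omega)
    refine ⟨Pi.single ⟨h - 2, by omega⟩ a + Pi.single ⟨h - 1, by omega⟩ c, ?_⟩
    show (_, _) = (_, _)
    simp [Pi.single_eq_of_ne hne, Pi.single_eq_of_ne hne.symm]
  have hair := LinearMap.finrank_range_add_finrank_ker (proj2 K hh)
  rw [hsurj, finrank_top, Module.finrank_prod, Module.finrank_self,
    Module.finrank_fin_fun] at hair
  omega


lemma phi_single (hh : 3 ≤ h) (lam : L) :
    phi K hh lam (Pi.single (⟨0, by omega⟩ : Fin h) (1 : K)) = (lam, 0) := by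
  simp only [phi, LinearMap.coe_mk, AddHom.coe_mk, Prod.mk.injEq]
  constructor
  · rw [Finset.sum_eq_single_of_mem (⟨0, by omega⟩ : Fin (h-1)) (Finset.mem_univ _)]
    · have hcast : Fin.castLE (show h - 1 ≤ h by omega) (⟨0, by omega⟩ : Fin (h - 1))
          = (⟨0, by omega⟩ : Fin h) := rfl
      rw [hcast, Pi.single_eq_same, one_smul]
      show lam ^ (0 + 1) = lam
      rw [zero_add, pow_one]
    · intro i _ hine
      have hne : Fin.castLE (show h - 1 ≤ h by omega) i ≠ (⟨0, by omega⟩ : Fin h) := by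
        intro hc
        apply hine
        apply Fin.ext
        simpa using congrArg Fin.val hc
      rw [Pi.single_eq_of_ne hne, zero_smul]
  · rw [Pi.single_eq_of_ne (Fin.ne_of_val_ne (show h - 2 ≠ 0 by omega)),
      Pi.single_eq_of_ne (Fin.ne_of_val_ne (show h - 1 ≠ 0 by omega)),
      zero_smul, zero_smul, add_zero]

end Stmt7
/-- for `h ≥ 3` and `λ` generating a power basis of `F_{q^h}` over `F_q`,
the set `C = {(t₁λ + … + t_{h-1}λ^{h-1}, t_{h-1} + t_h λ) : (t₁,…,t_h) ≠ 0}` is an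
`F_q`-linear set of rank `h` in which `(1,0)` has weight `h-2` and all other points
have weight `1`; consequently `|C| = q^{h-1} + q^{h-2} + 1`. -/
theorem stmt7 (K L : Type*) [Field K] [Field L] [Algebra K L] [Fintype K] [Fintype L]
    (h : ℕ) (hh : 3 ≤ h) (hrank : Module.finrank K L = h)
    (lam : L) (b : Basis (Fin h) K L) (hb : ∀ i : Fin h, b i = lam ^ (i : ℕ))
    (v : (Fin h → K) → L × L)
    (hv : ∀ t : Fin h → K, v t =
      (∑ i : Fin (h - 1), algebraMap K L (t (Fin.castLE (by omega) i)) * lam ^ ((i : ℕ) + 1),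
        algebraMap K L (t ⟨h - 2, by omega⟩) + algebraMap K L (t ⟨h - 1, by omega⟩) * lam))
    (W : Submodule K (L × L)) (hW : W = Submodule.span K (Set.range v))
    (C : Set (Projectivization L (L × L)))
    (hC : C = {P | ∃ t : Fin h → K, t ≠ 0 ∧ ∃ hvt : v t ≠ 0, P = Projectivization.mk L (v t) hvt}) :
    Module.finrank K W = h ∧
    linearSetOf K L W = C ∧
    weightOf K L W (Projectivization.mk L ((1 : L), (0 : L)) (by simp)) = h - 2 ∧
    (∀ P ∈ C, P ≠ Projectivization.mk L ((1 : L), (0 : L)) (by simp) →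
      weightOf K L W P = 1) ∧
    C.ncard = Fintype.card K ^ (h - 1) + Fintype.card K ^ (h - 2) + 1 := by
  classical
  have hveq : v = ⇑(Stmt7.phi K hh lam) := by
    funext t
    rw [hv t]
    show _ = (Stmt7.phi K hh lam) t
    simp only [Stmt7.phi, LinearMap.coe_mk, AddHom.coe_mk]
    simp only [Prod.mk.injEq]
    constructor
    · exact Finset.sum_congr rfl fun i _ => (Algebra.smul_def _ _).symm
    · rw [Algebra.smul_def, Algebra.smul_def, mul_one]
  subst hveq
  set φ := Stmt7.phi K hh lam with hφdef
  have hlam := Stmt7.lam_ne_zero hh lam b hb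
  have hWr : W = LinearMap.range φ := by
    rw [hW]
    apply le_antisymm
    · exact Submodule.span_le.mpr (by rintro x ⟨t, rfl⟩; exact ⟨t, rfl⟩)
    · rintro x ⟨t, rfl⟩
      exact Submodule.subset_span ⟨t, rfl⟩
  have hinj : Function.Injective φ := Stmt7.phi_inj hh lam b hb
  have hsndzero : ∀ t : Fin h → K, (φ t).2 = 0 ↔ Stmt7.Wp t = 0 := by
    intro t
    constructor
    · intro h2
      exact Stmt7.vanish lam b hb (lt_of_le_of_lt (Stmt7.Wp_natDegree_le t) (by omega))
        (by rw [← Stmt7.phi_snd hh lam t]; exact h2)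
    · intro h2
      rw [Stmt7.phi_snd hh lam t, h2, map_zero]
  have htne : ∀ t : Fin h → K, Stmt7.Wp t ≠ 0 → t ≠ 0 := by
    intro t hwt ht0
    rw [ht0] at hwt
    exact hwt Stmt7.Wp_zero
  have part1 : Module.finrank K W = h := by
    rw [hWr, LinearMap.finrank_range_of_inj hinj, Module.finrank_fin_fun]
  have part2 : linearSetOf K L W = C := by
    ext P
    simp only [linearSetOf, hC, Set.mem_setOf_eq]
    constructor
    · rintro ⟨x, hx0, hxW, rfl⟩
      rw [hWr] at hxW
      obtain ⟨t, rfl⟩ := hxW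
      exact ⟨t, fun h0 => hx0 (by rw [h0, map_zero]), hx0, rfl⟩
    · rintro ⟨t, ht0, hvt, rfl⟩
      exact ⟨φ t, hvt, hWr ▸ LinearMap.mem_range_self φ t, rfl⟩
  have part3 : weightOf K L W
      (Projectivization.mk L ((1 : L), (0 : L)) (by simp)) = h - 2 := by
    have hmap : W ⊓ ((Projectivization.mk L ((1:L),(0:L)) (by simp)).submodule.restrictScalars K)
        = Submodule.map φ (LinearMap.ker (Stmt7.proj2 K hh)) := by
      ext x
      simp only [Submodule.mem_inf, Submodule.restrictScalars_mem, Projectivization.submodule_mk,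
        Submodule.mem_span_singleton, Submodule.mem_map, LinearMap.mem_ker]
      constructor
      · rintro ⟨hxW, c, hc⟩
        rw [hWr] at hxW
        obtain ⟨t, rfl⟩ := hxW
        have hsnd : (φ t).2 = 0 := by rw [← hc]; simp
        exact ⟨t, (Stmt7.Wp_eq_zero_iff_proj2 hh t).mp ((hsndzero t).mp hsnd), rfl⟩
      · rintro ⟨t, htk, rfl⟩
        have hsnd : (φ t).2 = 0 :=
          (hsndzero t).mpr ((Stmt7.Wp_eq_zero_iff_proj2 hh t).mpr htk)
        refine ⟨hWr ▸ LinearMap.mem_range_self φ t, (φ t).1, ?_⟩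
        rw [Prod.smul_mk, smul_eq_mul, smul_eq_mul, mul_one, mul_zero]
        exact Prod.ext rfl hsnd.symm
    unfold weightOf
    rw [hmap, ← LinearEquiv.finrank_eq
      (Submodule.equivMapOfInjective φ hinj (LinearMap.ker (Stmt7.proj2 K hh)))]
    exact Stmt7.proj2_rank hh
  have part4 : ∀ P ∈ C, P ≠ Projectivization.mk L ((1 : L), (0 : L)) (by simp) →
      weightOf K L W P = 1 := by
    intro P hPC hPne
    rw [hC] at hPC
    obtain ⟨t, ht0, hvt, rfl⟩ := hPC
    have hwt : Stmt7.Wp t ≠ 0 := by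
      intro hw0
      apply hPne
      have hsnd : (φ t).2 = 0 := (hsndzero t).mpr hw0
      rw [Projectivization.mk_eq_mk_iff']
      refine ⟨(φ t).1, ?_⟩
      rw [Prod.smul_mk, smul_eq_mul, smul_eq_mul, mul_one, mul_zero]
      exact Prod.ext rfl hsnd.symm
    have hint : W ⊓ ((Projectivization.mk L (φ t) hvt).submodule.restrictScalars K)
        = Submodule.span K {φ t} := by
      apply le_antisymm
      · intro x hx
        rw [Submodule.mem_inf] at hx
        obtain ⟨hxW, hxP⟩ := hx
        rw [hWr] at hxW
        obtain ⟨s, rfl⟩ := hxW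
        rw [Submodule.restrictScalars_mem, Projectivization.submodule_mk,
          Submodule.mem_span_singleton] at hxP
        obtain ⟨c, hc⟩ := hxP
        obtain ⟨μ, rfl⟩ := Stmt7.keyprop hh lam b hb hwt hc.symm
        rw [map_smul]
        exact Submodule.smul_mem _ μ (Submodule.mem_span_singleton_self _)
      · rw [Submodule.span_le, Set.singleton_subset_iff]
        refine Submodule.mem_inf.mpr ⟨hWr ▸ LinearMap.mem_range_self φ t, ?_⟩
        rw [Submodule.restrictScalars_mem, Projectivization.submodule_mk]
        exact Submodule.mem_span_singleton_self _
    unfold weightOf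
    rw [hint, finrank_span_singleton hvt]
  refine ⟨part1, part2, part3, part4, ?_⟩
  -- Part 5 : counting
  have hq2 : 2 ≤ Fintype.card K := Fintype.one_lt_card
  set P0 : Projectivization L (L × L) :=
    Projectivization.mk L ((1 : L), (0 : L)) (by simp) with hP0def
  set A : Finset (Fin h → K) := Finset.univ.filter (fun t => Stmt7.Wp t ≠ 0) with hAdef
  have hAmem : ∀ t : Fin h → K, t ∈ A ↔ Stmt7.Wp t ≠ 0 := by
    intro t; rw [hAdef, Finset.mem_filter]; simp
  have hAner : ∀ t ∈ A, φ t ≠ 0 := by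
    intro t htA h0
    refine (hAmem t).mp htA ?_
    refine (hsndzero t).mp ?_
    rw [h0]; rfl
  set m : (Fin h → K) → Projectivization L (L × L) :=
    fun t => if hvt : φ t ≠ 0 then Projectivization.mk L (φ t) hvt else P0 with hmdef
  have hm : ∀ (t : Fin h → K) (h0 : φ t ≠ 0), m t = Projectivization.mk L (φ t) h0 := by
    intro t h0
    rw [hmdef]
    exact dif_pos h0
  -- the cardinality of A
  have hcardker : (Finset.univ.filter (fun t : Fin h → K => Stmt7.Wp t = 0)).card
      = Fintype.card K ^ (h - 2) := by
    rw [← Fintype.card_subtype]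
    have e : {t : Fin h → K // Stmt7.Wp t = 0} ≃ LinearMap.ker (Stmt7.proj2 K hh) :=
      Equiv.subtypeEquivRight (by
        intro t
        rw [Stmt7.Wp_eq_zero_iff_proj2 hh t, LinearMap.mem_ker])
    rw [Fintype.card_congr e, Module.card_eq_pow_finrank (K := K), Stmt7.proj2_rank hh]
  have hcardA : A.card + Fintype.card K ^ (h - 2) = Fintype.card K ^ h := by
    have hsplit := Finset.card_filter_add_card_filter_not
      (s := (Finset.univ : Finset (Fin h → K))) (p := fun t => Stmt7.Wp t = 0)
    rw [Finset.card_univ, Fintype.card_fun, Fintype.card_fin] at hsplit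
    rw [hcardker] at hsplit
    have hAcard : A.card
        = (Finset.univ.filter (fun t : Fin h → K => ¬ Stmt7.Wp t = 0)).card := rfl
    rw [hAcard]
    omega
  -- fibers of m over A have q - 1 elements
  have hfib : ∀ P ∈ A.image m, (A.filter (fun s => m s = P)).card = Fintype.card K - 1 := by
    intro P hP
    obtain ⟨t0, ht0A, rfl⟩ := Finset.mem_image.mp hP
    have hwt0 : Stmt7.Wp t0 ≠ 0 := (hAmem t0).mp ht0A
    have hφt0 : φ t0 ≠ 0 := hAner t0 ht0A
    have ht0ne : t0 ≠ 0 := htne t0 hwt0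
    have himg : A.filter (fun s => m s = m t0)
        = (Finset.univ.filter (fun μ : K => μ ≠ 0)).image (fun μ => μ • t0) := by
      ext s
      simp only [Finset.mem_filter, Finset.mem_image, Finset.mem_univ, true_and]
      constructor
      · rintro ⟨hsA, hms⟩
        have hφs : φ s ≠ 0 := hAner s hsA
        rw [hm s hφs, hm t0 hφt0, Projectivization.mk_eq_mk_iff'] at hms
        obtain ⟨c, hc⟩ := hms
        obtain ⟨μ, rfl⟩ := Stmt7.keyprop hh lam b hb hwt0 hc.symm
        refine ⟨μ, ?_, rfl⟩
        rintro rfl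
        rw [zero_smul] at hsA
        exact ((hAmem 0).mp hsA) Stmt7.Wp_zero
      · rintro ⟨μ, hμ, rfl⟩
        have hsA : μ • t0 ∈ A := by
          rw [hAmem, Stmt7.Wp_smul]
          exact mul_ne_zero (by simpa using hμ) hwt0
        refine ⟨hsA, ?_⟩
        have hφs : φ (μ • t0) ≠ 0 := hAner _ hsA
        rw [hm _ hφs, hm t0 hφt0, Projectivization.mk_eq_mk_iff']
        refine ⟨algebraMap K L μ, ?_⟩
        rw [algebraMap_smul, ← map_smul]
    rw [himg, Finset.card_image_of_injective _ (smul_left_injective K ht0ne),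
      Finset.filter_ne', Finset.card_erase_of_mem (Finset.mem_univ _), Finset.card_univ]
  have hcount : A.card = (A.image m).card * (Fintype.card K - 1) := by
    rw [Finset.card_eq_sum_card_image m A]
    exact Finset.sum_const_nat hfib
  -- identify C with insert P0 (A.image m)
  have hP0mem : P0 ∉ A.image m := by
    intro hP0
    obtain ⟨t, htA, hmt⟩ := Finset.mem_image.mp hP0
    have hφt : φ t ≠ 0 := hAner t htA
    rw [hm t hφt, hP0def, Projectivization.mk_eq_mk_iff'] at hmt
    obtain ⟨a, ha⟩ := hmt
    have hsnd : (φ t).2 = 0 := by rw [← ha]; simp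
    exact ((hAmem t).mp htA) ((hsndzero t).mp hsnd)
  have hCB : C = ↑(insert P0 (A.image m)) := by
    rw [hC]
    ext P
    simp only [Set.mem_setOf_eq, Finset.coe_insert, Set.mem_insert_iff, Finset.mem_coe]
    constructor
    · rintro ⟨t, ht0, hvt, rfl⟩
      by_cases hw : Stmt7.Wp t = 0
      · left
        have hsnd : (φ t).2 = 0 := (hsndzero t).mpr hw
        rw [hP0def, Projectivization.mk_eq_mk_iff']
        refine ⟨(φ t).1, ?_⟩
        rw [Prod.smul_mk, smul_eq_mul, smul_eq_mul, mul_one, mul_zero]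
        exact Prod.ext rfl hsnd.symm
      · right
        exact Finset.mem_image.mpr ⟨t, (hAmem t).mpr hw, hm t hvt⟩
    · rintro (rfl | hPB)
      · -- P0 is in C
        refine ⟨Pi.single (⟨0, by omega⟩ : Fin h) (1 : K), ?_, ?_, ?_⟩
        · intro h0
          have h1 := congrFun h0 ⟨0, by omega⟩
          rw [Pi.single_eq_same] at h1
          exact one_ne_zero h1
        · rw [hφdef, Stmt7.phi_single hh lam]
          intro h0
          exact hlam (congrArg Prod.fst h0)
        · rw [hP0def, Projectivization.mk_eq_mk_iff']
          refine ⟨lam⁻¹, ?_⟩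
          rw [hφdef, Stmt7.phi_single hh lam, Prod.smul_mk, smul_eq_mul, smul_eq_mul, mul_zero,
            inv_mul_cancel₀ hlam]
      · obtain ⟨t, htA, rfl⟩ := Finset.mem_image.mp hPB
        have hφt : φ t ≠ 0 := hAner t htA
        exact ⟨t, htne t ((hAmem t).mp htA), hφt, (hm t hφt)⟩
  rw [hCB, Set.ncard_coe_finset, Finset.card_insert_of_notMem hP0mem]
  -- final arithmetic
  obtain ⟨k, rfl⟩ : ∃ k, h = k + 3 := ⟨h - 3, by omega⟩
  obtain ⟨r, hr⟩ : ∃ r, Fintype.card K = r + 1 := ⟨Fintype.card K - 1, by omega⟩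
  have hBcard : (A.image m).card = Fintype.card K ^ (k + 2) + Fintype.card K ^ (k + 1) := by
    apply Nat.eq_of_mul_eq_mul_right (show 0 < Fintype.card K - 1 by omega)
    rw [← hcount]
    have hident : (Fintype.card K ^ (k + 2) + Fintype.card K ^ (k + 1))
        * (Fintype.card K - 1) + Fintype.card K ^ (k + 1) = Fintype.card K ^ (k + 3) := by
      rw [hr]
      have : r + 1 - 1 = r := by omega
      rw [this]
      ring
    have h1 : k + 3 - 2 = k + 1 := by omega
    rw [h1] at hcardA
    omega
  rw [hBcard]
  have h1 : k + 3 - 1 = k + 2 := by omega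
  have h2 : k + 3 - 2 = k + 1 := by omega
  rw [h1, h2]
end

section
/- For every prime power q and every h with (h-i) | h or (h-i+1) | h (with appropriate divisibility and i in range), there exists an F_q-linear i-club of rank h in PG(1, q^h). In particular: if h - i divides h there is an i-club of rank h, and if h - i + 1 divides h there is an i-club of rank h. -/
set_option linter.unusedSectionVars false

open Projectivization Module Polynomial

section Aux

variable {K L : Type*} [Field K] [Field L] [Algebra K L] [Fintype K] [Fintype L]

private lemma pow_fix_iter {a : L} {r : ℕ} (ha : a ^ r = a) : ∀ m : ℕ, a ^ r ^ m = a
  | 0 => by simp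
  | m + 1 => by rw [pow_succ, pow_mul, pow_fix_iter ha m, ha]

private lemma algebraMap_pow_card (k : K) :
    (algebraMap K L k) ^ Fintype.card K = algebraMap K L k := by
  rw [← map_pow, FiniteField.pow_card]

/-- the `q^m`-power map as a `K`-linear map on `L` -/
private def qpowₗ (p nn : ℕ) [Fact p.Prime] [CharP L p]
    (hq : Fintype.card K = p ^ nn) (m : ℕ) : L →ₗ[K] L where
  toFun x := x ^ Fintype.card K ^ m
  map_add' a b := by
    rw [hq, ← pow_mul]
    exact add_pow_char_pow a b p (nn * m)
  map_smul' k x := by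
    simp only [RingHom.id_apply, Algebra.smul_def, mul_pow]
    rw [pow_fix_iter (algebraMap_pow_card k) m]

private lemma qpowₗ_apply (p nn : ℕ) [Fact p.Prime] [CharP L p]
    (hq : Fintype.card K = p ^ nn) (m : ℕ) (x : L) :
    qpowₗ p nn hq m x = x ^ Fintype.card K ^ m := rfl

/-- dimension bound from polynomial roots -/
private lemma finrank_le_of_poly (V : Submodule K L) (P : L[X]) (hP : P ≠ 0)
    (hroot : ∀ x ∈ V, P.eval x = 0) (m : ℕ) (hdeg : P.natDegree ≤ Fintype.card K ^ m) :
    finrank K V ≤ m := by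
  classical
  haveI : Fintype V := Fintype.ofFinite _
  have hinj : Function.Injective
      (fun v : V => (⟨(v : L), by
        rw [Multiset.mem_toFinset, Polynomial.mem_roots hP]
        exact hroot v.1 v.2⟩ : {x // x ∈ P.roots.toFinset})) := by
    intro a b hab
    exact Subtype.ext (Subtype.mk_eq_mk.mp hab)
  have hcard : Fintype.card V ≤ P.roots.toFinset.card := by
    have := Fintype.card_le_of_injective _ hinj
    rwa [Fintype.card_coe] at this
  have h2 : P.roots.toFinset.card ≤ P.natDegree :=
    (Multiset.toFinset_card_le _).trans (Polynomial.card_roots' P)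
  have h3 : Fintype.card K ^ finrank K V ≤ Fintype.card K ^ m := by
    rw [← card_eq_pow_finrank (K := K) (V := V)]
    exact hcard.trans (h2.trans hdeg)
  exact (Nat.pow_le_pow_iff_right Fintype.one_lt_card).mp h3

variable (L) in
/-- the subfield fixed by the `q^m` power map, as a `K`-submodule -/
private def Fsub (p nn : ℕ) [Fact p.Prime] [CharP L p]
    (hq : Fintype.card K = p ^ nn) (m : ℕ) : Submodule K L where
  carrier := {x | x ^ Fintype.card K ^ m = x}
  add_mem' := by
    intro a b ha hb
    simp only [Set.mem_setOf_eq] at *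
    rw [hq, ← pow_mul] at ha hb ⊢
    rw [add_pow_char_pow a b p (nn * m), ha, hb]
  zero_mem' := by
    simp only [Set.mem_setOf_eq]
    exact zero_pow (pow_ne_zero m Fintype.card_ne_zero)
  smul_mem' := by
    intro c x hx
    simp only [Set.mem_setOf_eq] at *
    rw [Algebra.smul_def, mul_pow, hx, pow_fix_iter (algebraMap_pow_card c) m]

private lemma mem_Fsub_iff (p nn : ℕ) [Fact p.Prime] [CharP L p]
    (hq : Fintype.card K = p ^ nn) (m : ℕ) (x : L) :
    x ∈ Fsub L p nn hq m ↔ x ^ Fintype.card K ^ m = x := Iff.rfl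

private lemma finrank_Fsub_le (p nn : ℕ) [Fact p.Prime] [CharP L p]
    (hq : Fintype.card K = p ^ nn) (m : ℕ) (hm : 1 ≤ m) :
    finrank K (Fsub L p nn hq m) ≤ m := by
  set M := Fintype.card K ^ m with hM
  have hM2 : 2 ≤ M := Nat.one_lt_pow (by omega) Fintype.one_lt_card
  refine finrank_le_of_poly _ (X ^ M - X) ?_ ?_ m ?_
  · intro hzero
    have h1 : (X ^ M - X : L[X]).coeff M = 1 := by
      rw [coeff_sub, coeff_X_pow, coeff_X_of_ne_one (by omega)]
      simp
    rw [hzero, coeff_zero] at h1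
    exact one_ne_zero h1.symm
  · intro x hx
    have hfix : x ^ M = x := hx
    rw [eval_sub, eval_pow, eval_X, hfix, sub_self]
  · refine (natDegree_sub_le _ _).trans ?_
    rw [natDegree_X_pow, natDegree_X]
    omega

private lemma Fsub_one_eq_span (p nn : ℕ) [Fact p.Prime] [CharP L p]
    (hq : Fintype.card K = p ^ nn) :
    Submodule.span K ({1} : Set L) = Fsub L p nn hq 1 := by
  have hle : Submodule.span K ({1} : Set L) ≤ Fsub L p nn hq 1 := by
    rw [Submodule.span_le, Set.singleton_subset_iff]
    show (1 : L) ^ Fintype.card K ^ 1 = 1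
    exact one_pow _
  refine Submodule.eq_of_le_of_finrank_le hle ?_
  rw [finrank_span_singleton (one_ne_zero : (1 : L) ≠ 0)]
  exact finrank_Fsub_le p nn hq 1 le_rfl

end Aux

section Trace

variable {K L : Type*} [Field K] [Field L] [Algebra K L] [Fintype K] [Fintype L]

private lemma exists_T (p nn : ℕ) [Fact p.Prime] [CharP L p]
    (hq : Fintype.card K = p ^ nn) (h t : ℕ) (hrank : finrank K L = h)
    (ht : 0 < t) (htd : t ∣ h) (hh : 0 < h) :
    ∃ T : L →ₗ[K] L,
      (∀ x : L, T x ∈ Fsub L p nn hq t) ∧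
      (∀ lam x : L, lam ∈ Fsub L p nn hq t → T (lam * x) = lam * T x) ∧
      finrank K (LinearMap.ker T) = h - t ∧
      LinearMap.range T = Fsub L p nn hq t := by
  haveI : FiniteDimensional K L := FiniteDimensional.of_finrank_pos (by omega : 0 < finrank K L)
  obtain ⟨s, hs⟩ := htd
  have hs0 : 0 < s := by
    rcases Nat.eq_zero_or_pos s with h0 | h0
    · subst h0; omega
    · exact h0
  obtain ⟨s', rfl⟩ : ∃ s', s = s' + 1 := ⟨s - 1, by omega⟩
  set q := Fintype.card K with hqdef
  have hq1 : 1 < q := Fintype.one_lt_card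
  have htle : t ≤ h := by
    rw [hs]; exact Nat.le_mul_of_pos_right t hs0
  have hht : t * s' = h - t := by rw [hs, Nat.mul_succ, Nat.add_sub_cancel]
  set s := s' + 1 with hsdef
  set T : L →ₗ[K] L := ∑ j ∈ Finset.range s, qpowₗ p nn hq (t * j) with hT
  have hTapply : ∀ x : L, T x = ∑ j ∈ Finset.range s, x ^ q ^ (t * j) := by
    intro x
    rw [hT]
    simp [LinearMap.sum_apply, qpowₗ_apply]
    rfl
  have hcardL : Fintype.card L = q ^ h := by
    rw [card_eq_pow_finrank (K := K), hrank]
  have hxqh : ∀ x : L, x ^ q ^ (t * s) = x := by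
    intro x
    rw [← hs, ← hcardL]
    exact FiniteField.pow_card x
  -- T x lands in the fixed field
  have hmem : ∀ x : L, T x ∈ Fsub L p nn hq t := by
    intro x
    rw [mem_Fsub_iff]
    calc (T x) ^ q ^ t = qpowₗ p nn hq t (T x) := rfl
      _ = ∑ j ∈ Finset.range s, qpowₗ p nn hq t (x ^ q ^ (t * j)) := by
          rw [hTapply, map_sum]
      _ = ∑ j ∈ Finset.range s, x ^ q ^ (t * (j + 1)) := by
          refine Finset.sum_congr rfl fun j _ => ?_
          rw [qpowₗ_apply, ← pow_mul, ← pow_add, mul_add, mul_one]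
      _ = T x := by
          rw [hTapply]
          have h1 := Finset.sum_range_succ' (fun j => x ^ q ^ (t * j)) s
          have h2 := Finset.sum_range_succ (fun j => x ^ q ^ (t * j)) s
          rw [h1] at h2
          simp only [Nat.mul_zero, pow_zero, pow_one] at h2
          have h3 : x ^ q ^ (t * s) = x := hxqh x
          rw [h3] at h2
          linear_combination h2
  -- F-semilinearity
  have hFlin : ∀ lam x : L, lam ∈ Fsub L p nn hq t → T (lam * x) = lam * T x := by
    intro lam x hlam
    rw [mem_Fsub_iff] at hlam
    rw [hTapply, hTapply, Finset.mul_sum]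
    refine Finset.sum_congr rfl fun j _ => ?_
    rw [mul_pow]
    congr 1
    rw [pow_mul]
    exact pow_fix_iter hlam j
  -- the kernel polynomial
  set P : L[X] := ∑ j ∈ Finset.range s, (X : L[X]) ^ (q ^ (t * j)) with hP
  have hPne : P ≠ 0 := by
    intro h0
    have hc : P.coeff (q ^ (t * s')) = 1 := by
      rw [hP, finset_sum_coeff]
      rw [Finset.sum_eq_single_of_mem s' (by simp [hsdef])]
      · rw [coeff_X_pow, if_pos rfl]
      · intro j hj hne
        rw [coeff_X_pow, if_neg]
        intro heq
        have := Nat.pow_right_injective (by omega : 2 ≤ q) heq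
        exact hne (Nat.eq_of_mul_eq_mul_left ht this).symm
    rw [h0, coeff_zero] at hc
    exact one_ne_zero hc.symm
  have hPdeg : P.natDegree ≤ q ^ (h - t) := by
    rw [hP, ← hht]
    refine natDegree_sum_le_of_forall_le _ _ fun j hj => ?_
    rw [natDegree_X_pow]
    refine Nat.pow_le_pow_right (by omega) ?_
    have : j ≤ s' := by
      rw [Finset.mem_range] at hj
      omega
    exact Nat.mul_le_mul_left t this
  have hPeval : ∀ x : L, P.eval x = T x := by
    intro x
    rw [hP, hTapply, eval_finset_sum]
    refine Finset.sum_congr rfl fun j _ => ?_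
    rw [eval_pow, eval_X]
  -- dimension bookkeeping
  have hkerle : finrank K (LinearMap.ker T) ≤ h - t := by
    refine finrank_le_of_poly _ P hPne ?_ (h - t) hPdeg
    intro x hx
    rw [hPeval]
    exact hx
  have hrangele : LinearMap.range T ≤ Fsub L p nn hq t := by
    rintro y ⟨x, rfl⟩
    exact hmem x
  have hFle : finrank K (Fsub L p nn hq t) ≤ t := finrank_Fsub_le p nn hq t ht
  have hrk : finrank K (LinearMap.range T) ≤ t :=
    le_trans (Submodule.finrank_mono hrangele) hFle
  have hrn := LinearMap.finrank_range_add_finrank_ker T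
  rw [hrank] at hrn
  have hkereq : finrank K (LinearMap.ker T) = h - t := by omega
  have hrkeq : finrank K (LinearMap.range T) = t := by omega
  have hrangeeq : LinearMap.range T = Fsub L p nn hq t := by
    refine Submodule.eq_of_le_of_finrank_le hrangele ?_
    rw [hrkeq]
    exact hFle
  exact ⟨T, hmem, hFlin, hkereq, hrangeeq⟩

end Trace

section ClubCore

variable {K L : Type*} [Field K] [Field L] [Algebra K L] [Fintype K] [Fintype L]

private lemma finrank_comap_eq [FiniteDimensional K L] (T : L →ₗ[K] L) (S : Submodule K L)
    (hS : S ≤ LinearMap.range T) :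
    finrank K (S.comap T) = finrank K S + finrank K (LinearMap.ker T) := by
  have hres : ∀ x ∈ S.comap T, T x ∈ S := fun x hx => hx
  set T' := T.restrict hres with hT'
  have hsurj : Function.Surjective T' := by
    rintro ⟨y, hy⟩
    obtain ⟨x, hx⟩ := hS hy
    refine ⟨⟨x, ?_⟩, ?_⟩
    · show T x ∈ S
      rw [hx]; exact hy
    · exact Subtype.ext hx
  have hkereq : finrank K (LinearMap.ker T') = finrank K (LinearMap.ker T) := by
    refine LinearEquiv.finrank_eq ?_
    exact
      { toFun := fun x => ⟨x.1.1, by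
          have hx := x.2
          rw [LinearMap.mem_ker] at hx ⊢
          exact congrArg Subtype.val hx⟩
        map_add' := fun a b => rfl
        map_smul' := fun c a => rfl
        invFun := fun y => ⟨⟨y.1, by
            have hy : T y.1 = 0 := y.2
            show T y.1 ∈ S
            rw [hy]; exact S.zero_mem⟩, by
          rw [LinearMap.mem_ker]
          apply Subtype.ext
          exact y.2⟩
        left_inv := fun a => by ext; rfl
        right_inv := fun a => by ext; rfl }
  have hrn := LinearMap.finrank_range_add_finrank_ker T'
  rw [LinearMap.range_eq_top.mpr hsurj, finrank_top, hkereq] at hrn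
  omega

private def mulRightEquiv (a : L) (ha : a ≠ 0) : L ≃ₗ[K] L :=
  LinearEquiv.ofLinear (LinearMap.mulRight K a) (LinearMap.mulRight K a⁻¹)
    (by ext x; simp [LinearMap.mulRight_apply, mul_assoc, inv_mul_cancel₀ ha])
    (by ext x; simp [LinearMap.mulRight_apply, mul_assoc, mul_inv_cancel₀ ha])

private lemma mem_W_iff (f : L →ₗ[K] L) (v : L × L) :
    v ∈ LinearMap.range ((LinearMap.id : L →ₗ[K] L).prod f) ↔ f v.1 = v.2 := by
  constructor
  · rintro ⟨a, rfl⟩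
    simp [LinearMap.prod_apply]
  · intro hfv
    exact ⟨v.1, by simp [LinearMap.prod_apply, Prod.ext_iff, hfv]⟩

private lemma weightOf_mk (f : L →ₗ[K] L) (x y : L) (hv : (x, y) ≠ 0) :
    weightOf K L (LinearMap.range ((LinearMap.id : L →ₗ[K] L).prod f))
        (Projectivization.mk L (x, y) hv)
      = finrank K (LinearMap.ker ((f.comp (LinearMap.mulRight K x))
          - (LinearMap.mulRight K y))) := by
  set W := LinearMap.range ((LinearMap.id : L →ₗ[K] L).prod f) with hW
  set ℓ := (f.comp (LinearMap.mulRight K x)) - (LinearMap.mulRight K y) with hℓ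
  have hℓapp : ∀ lam : L, ℓ lam = f (lam * x) - lam * y := fun lam => rfl
  have hmemker : ∀ lam : L, lam ∈ LinearMap.ker ℓ ↔ f (lam * x) = lam * y := by
    intro lam
    rw [LinearMap.mem_ker, hℓapp, sub_eq_zero]
  symm
  refine LinearEquiv.finrank_eq ?_
  have hmem : ∀ lam : L, lam ∈ LinearMap.ker ℓ →
      ((lam * x, lam * y) : L × L) ∈
        W ⊓ ((Projectivization.mk L (x, y) hv).submodule.restrictScalars K) := by
    intro lam hlam
    rw [Submodule.mem_inf]
    constructor
    · rw [hW, mem_W_iff]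
      exact (hmemker lam).mp hlam
    · rw [Submodule.restrictScalars_mem, Projectivization.submodule_mk,
        Submodule.mem_span_singleton]
      exact ⟨lam, by rw [Prod.smul_mk, smul_eq_mul, smul_eq_mul]⟩
  refine LinearEquiv.ofBijective
    { toFun := fun lam => ⟨((lam : L) * x, (lam : L) * y), hmem lam.1 lam.2⟩
      map_add' := fun a b => by
        apply Subtype.ext
        show (((a + b : LinearMap.ker ℓ) : L) * x, ((a + b : LinearMap.ker ℓ) : L) * y) = ((a : L) * x, (a : L) * y) + ((b : L) * x, (b : L) * y)
        simp [Prod.ext_iff, add_mul]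
      map_smul' := fun c a => by
        apply Subtype.ext
        show (((c • a : LinearMap.ker ℓ) : L) * x, ((c • a : LinearMap.ker ℓ) : L) * y) = c • ((a : L) * x, (a : L) * y)
        simp [Prod.ext_iff, Prod.smul_mk, Algebra.smul_def, mul_assoc] } ⟨?_, ?_⟩
  · intro a b hab
    have hval := congrArg (fun z => (Subtype.val z : L × L)) hab
    have h1 : (a : L) * x = (b : L) * x := congrArg Prod.fst hval
    have h2 : (a : L) * y = (b : L) * y := congrArg Prod.snd hval
    have hxy : x ≠ 0 ∨ y ≠ 0 := by
      by_contra hc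
      push_neg at hc
      exact hv (by rw [hc.1, hc.2]; rfl)
    apply Subtype.ext
    rcases hxy with hx | hy
    · exact mul_right_cancel₀ hx h1
    · exact mul_right_cancel₀ hy h2
  · rintro ⟨⟨w1, w2⟩, hw⟩
    rw [Submodule.mem_inf] at hw
    obtain ⟨hw1, hw2⟩ := hw
    rw [Submodule.restrictScalars_mem, Projectivization.submodule_mk,
      Submodule.mem_span_singleton] at hw2
    obtain ⟨lam, hlam⟩ := hw2
    rw [Prod.smul_mk, smul_eq_mul, smul_eq_mul, Prod.mk.injEq] at hlam
    have hker : lam ∈ LinearMap.ker ℓ := by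
      rw [hmemker]
      rw [hW, mem_W_iff] at hw1
      simp only at hw1
      rw [← hlam.1, ← hlam.2] at hw1
      exact hw1
    exact ⟨⟨lam, hker⟩, Subtype.ext (by show ((lam * x, lam * y) : L × L) = (w1, w2); rw [hlam.1, hlam.2])⟩

end ClubCore

section ClubMain

variable {K L : Type*} [Field K] [Field L] [Algebra K L] [Fintype K] [Fintype L]

private lemma mulRightEquiv_apply (a : L) (ha : a ≠ 0) (x : L) :
    (mulRightEquiv (K := K) a ha : L →ₗ[K] L) x = x * a := rfl

private lemma club_of_map (h i : ℕ) (hrank : finrank K L = h) (hh : 0 < h) (hi : 1 ≤ i)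
    (f : L →ₗ[K] L) (hker : finrank K (LinearMap.ker f) = i)
    (hS : ∀ x lam : L, x ≠ 0 → f x ≠ 0 → f (lam * x) = lam * f x →
      lam ∈ Submodule.span K ({1} : Set L)) :
    ∃ W : Submodule K (L × L), finrank K W = h ∧
      ∃ N ∈ linearSetOf K L W, weightOf K L W N = i ∧
        ∀ P ∈ linearSetOf K L W, P ≠ N → weightOf K L W P = 1 := by
  haveI : FiniteDimensional K L := FiniteDimensional.of_finrank_pos (by omega)
  set W := LinearMap.range ((LinearMap.id : L →ₗ[K] L).prod f) with hW
  have hWrank : finrank K W = h := by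
    rw [hW, LinearMap.finrank_range_of_inj, hrank]
    intro a b hab
    exact congrArg Prod.fst hab
  have hne : LinearMap.ker f ≠ ⊥ := by
    intro hbot
    rw [hbot, finrank_bot] at hker
    omega
  obtain ⟨x₀, hx₀mem, hx₀⟩ := (Submodule.ne_bot_iff _).mp hne
  have hfx₀ : f x₀ = 0 := hx₀mem
  have hv₀ : ((x₀, (0 : L)) : L × L) ≠ 0 := by
    intro h0
    exact hx₀ (congrArg Prod.fst h0)
  set N := Projectivization.mk L (x₀, (0 : L)) hv₀ with hN
  have hNmem : N ∈ linearSetOf K L W := by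
    exact ⟨(x₀, 0), hv₀, (mem_W_iff f _).mpr (by simpa using hfx₀), rfl⟩
  have hNweight : weightOf K L W N = i := by
    rw [hN, hW, weightOf_mk]
    have hkerℓ : LinearMap.ker ((f.comp (LinearMap.mulRight K x₀))
          - (LinearMap.mulRight K (0 : L)))
        = Submodule.comap ((mulRightEquiv (K := K) x₀ hx₀ : L ≃ₗ[K] L) : L →ₗ[K] L)
            (LinearMap.ker f) := by
      ext lam
      simp only [LinearMap.mem_ker, Submodule.mem_comap, LinearMap.sub_apply,
        LinearMap.comp_apply, LinearMap.mulRight_apply, mul_zero, sub_zero,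
        mulRightEquiv_apply]
    rw [hkerℓ, Submodule.comap_equiv_eq_map_symm, LinearEquiv.finrank_map_eq]
    exact hker
  refine ⟨W, hWrank, N, hNmem, hNweight, ?_⟩
  rintro P ⟨⟨x, y⟩, hv, hvW, rfl⟩ hPN
  rw [hW] at hvW
  have hfx : f x = y := by simpa using (mem_W_iff f _).mp hvW
  subst hfx
  have hx : x ≠ 0 := by
    intro h0
    apply hv
    subst h0
    simp
  have hfxne : f x ≠ 0 := by
    intro h0
    apply hPN
    rw [hN, Projectivization.mk_eq_mk_iff']
    refine ⟨x * x₀⁻¹, ?_⟩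
    rw [Prod.smul_mk, smul_eq_mul, smul_eq_mul, mul_zero, h0]
    rw [mul_assoc, inv_mul_cancel₀ hx₀, mul_one]
  rw [hW, weightOf_mk]
  have hkerℓ : LinearMap.ker ((f.comp (LinearMap.mulRight K x))
        - (LinearMap.mulRight K (f x)))
      = Submodule.span K ({1} : Set L) := by
    ext lam
    rw [LinearMap.mem_ker]
    simp only [LinearMap.sub_apply, LinearMap.comp_apply, LinearMap.mulRight_apply]
    rw [sub_eq_zero]
    constructor
    · intro heq
      exact hS x lam hx hfxne heq
    · intro hmem
      obtain ⟨k, rfl⟩ := Submodule.mem_span_singleton.mp hmem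
      rw [smul_mul_assoc, one_mul, map_smul, smul_mul_assoc, one_mul]
  rw [hkerℓ, finrank_span_singleton one_ne_zero]

end ClubMain

/-- if `(h - i) ∣ h` or `(h - i + 1) ∣ h` (with `1 ≤ i < h`), then there
exists an `F_q`-linear `i`-club of rank `h` in `PG(1, q^h)`, i.e. a linear set of rank
`h` with exactly one point of weight `i` (the head) and all other points of weight 1. -/
theorem stmt10 (K L : Type*) [Field K] [Field L] [Algebra K L] [Fintype K] [Fintype L]
    (h i : ℕ) (hi : 1 ≤ i) (hih : i < h) (hrank : Module.finrank K L = h)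
    (hdvd : (h - i) ∣ h ∨ (h - i + 1) ∣ h) :
    ∃ W : Submodule K (L × L), Module.finrank K W = h ∧
      ∃ N ∈ linearSetOf K L W, weightOf K L W N = i ∧
        ∀ P ∈ linearSetOf K L W, P ≠ N → weightOf K L W P = 1 := by
  have hh : 0 < h := by omega
  haveI : FiniteDimensional K L := FiniteDimensional.of_finrank_pos (by omega)
  set p := ringChar K with hp
  haveI : CharP K p := ringChar.charP K
  have hpprime : p.Prime := CharP.char_is_prime K p
  haveI : Fact p.Prime := ⟨hpprime⟩
  haveI : CharP L p := charP_of_injective_algebraMap (algebraMap K L).injective p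
  obtain ⟨nn, -, hq⟩ := FiniteField.card K p
  set q := Fintype.card K with hqdef
  have hq1 : 1 < q := Fintype.one_lt_card
  have hq0 : q ≠ 0 := by omega
  rcases hdvd with htd | htd
  · -- case `t = h - i`:  `f x = (T x) ^ q`
    set t := h - i with htdef
    have ht : 0 < t := by omega
    obtain ⟨T, hmem, hFlin, hkerT, hrangeT⟩ := exists_T p ↑nn hq h t hrank ht htd hh
    set f := (qpowₗ p ↑nn hq 1).comp T with hf
    have hfapp : ∀ x, f x = (T x) ^ q ^ 1 := fun x => rfl
    have hker : finrank K (LinearMap.ker f) = i := by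
      have hkk : LinearMap.ker f = LinearMap.ker T := by
        ext x
        rw [LinearMap.mem_ker, LinearMap.mem_ker, hfapp]
        constructor
        · intro h0
          exact (pow_eq_zero_iff (pow_ne_zero 1 hq0)).mp h0
        · intro h0
          rw [h0]
          exact zero_pow (pow_ne_zero 1 hq0)
      rw [hkk, hkerT]
      omega
    refine club_of_map h i hrank hh hi f hker ?_
    intro x lam hx hfx heq
    rw [hfapp] at hfx
    rw [hfapp, hfapp] at heq
    have hc : T x ≠ 0 := by
      intro h0
      apply hfx
      rw [h0]
      exact zero_pow (pow_ne_zero 1 hq0)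
    have hcmem : (T x) ^ q ^ t = T x := hmem x
    have hUmem : (T (lam * x)) ^ q ^ t = T (lam * x) := hmem _
    have hcq : (T x) ^ q ^ 1 ≠ 0 := hfx
    have hlamF : lam ∈ Fsub L p ↑nn hq t := by
      rw [mem_Fsub_iff]
      have hlam_eq : lam = (T (lam * x)) ^ q ^ 1 * ((T x) ^ q ^ 1)⁻¹ := by
        rw [heq, mul_assoc, mul_inv_cancel₀ hcq, mul_one]
      have e1 : ((T (lam * x)) ^ q ^ 1) ^ q ^ t = (T (lam * x)) ^ q ^ 1 := by
        rw [pow_right_comm, hUmem]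
      have e2 : (((T x) ^ q ^ 1)⁻¹) ^ q ^ t = ((T x) ^ q ^ 1)⁻¹ := by
        rw [inv_pow, pow_right_comm, hcmem]
      rw [hlam_eq, mul_pow, e1, e2]
    have hTlin := hFlin lam x hlamF
    rw [hTlin, mul_pow] at heq
    have hlam1 : lam ^ q ^ 1 = lam := mul_right_cancel₀ hcq heq
    rw [Fsub_one_eq_span p ↑nn hq]
    exact hlam1
  · -- case `t = h - i + 1`:  `f x = (T x) ^ q - T x`
    set t := h - i + 1 with htdef
    have ht : 0 < t := by omega
    obtain ⟨T, hmem, hFlin, hkerT, hrangeT⟩ := exists_T p ↑nn hq h t hrank ht htd hh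
    set f := (qpowₗ p ↑nn hq 1).comp T - T with hf
    have hfapp : ∀ x, f x = (T x) ^ q ^ 1 - T x := fun x => rfl
    have hle : Fsub L p ↑nn hq 1 ≤ LinearMap.range T := by
      rw [hrangeT]
      intro a ha
      rw [mem_Fsub_iff] at ha ⊢
      rw [pow_one] at ha
      exact pow_fix_iter ha t
    have hF1 : finrank K (Fsub L p ↑nn hq 1) = 1 := by
      rw [← Fsub_one_eq_span p ↑nn hq, finrank_span_singleton (one_ne_zero : (1 : L) ≠ 0)]
    have hker : finrank K (LinearMap.ker f) = i := by
      have hkk : LinearMap.ker f = (Fsub L p ↑nn hq 1).comap T := by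
        ext x
        rw [LinearMap.mem_ker, Submodule.mem_comap, mem_Fsub_iff, hfapp, sub_eq_zero]
      rw [hkk, finrank_comap_eq T _ hle, hF1, hkerT]
      omega
    refine club_of_map h i hrank hh hi f hker ?_
    intro x lam hx hfx heq
    rw [hfapp] at hfx
    rw [hfapp, hfapp] at heq
    have hc : T x ≠ 0 := by
      intro h0
      apply hfx
      rw [h0]
      rw [zero_pow (pow_ne_zero 1 hq0), sub_zero]
    have hcmem : (T x) ^ q ^ t = T x := hmem x
    have hUmem : (T (lam * x)) ^ q ^ t = T (lam * x) := hmem _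
    have hsub : ∀ a b : L, (a - b) ^ q ^ t = a ^ q ^ t - b ^ q ^ t := by
      intro a b
      rw [hq, ← pow_mul]
      exact sub_pow_char_pow (p := p) a b (↑nn * t)
    have hlamF : lam ∈ Fsub L p ↑nn hq t := by
      rw [mem_Fsub_iff]
      have hlam_eq : lam = ((T (lam * x)) ^ q ^ 1 - T (lam * x))
          * (((T x) ^ q ^ 1 - T x))⁻¹ := by
        rw [heq, mul_assoc, mul_inv_cancel₀ hfx, mul_one]
      have e1 : ((T (lam * x)) ^ q ^ 1 - T (lam * x)) ^ q ^ t
          = (T (lam * x)) ^ q ^ 1 - T (lam * x) := by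
        rw [hsub, pow_right_comm, hUmem]
      have e2 : ((((T x) ^ q ^ 1 - T x))⁻¹) ^ q ^ t = (((T x) ^ q ^ 1 - T x))⁻¹ := by
        rw [inv_pow, hsub, pow_right_comm, hcmem]
      rw [hlam_eq, mul_pow, e1, e2]
    have hTlin := hFlin lam x hlamF
    rw [hTlin, mul_pow, mul_sub] at heq
    have hcq : (T x) ^ q ^ 1 ≠ 0 := pow_ne_zero _ hc
    have hlam1 : lam ^ q ^ 1 = lam :=
      mul_right_cancel₀ hcq (sub_left_inj.mp heq)
    rw [Fsub_one_eq_span p ↑nn hq]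
    exact hlam1
end
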